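/- Assume the graph is connected and n ≥ 2. Then the set of eigenvalues λ of the graph 1-Laplacian admitting a nonconstant eigenvector is nonempty, and its minimum equals the optimal ratio Cheeger cut h_RCC: every nonconstant eigenvector of the 1-Laplacian has eigenvalue ≥ h_RCC, and there exists a nonconstant eigenvector of the 1-Laplacian with eigenvalue exactly h_RCC. -/

import Mathlib

open Finset

/-- The set-valued sign: `{-1}` for `x < 0`, `{1}` for `x > 0`, `[-1,1]` for `x = 0`. -/
noncomputable def signSet (x : ℝ) : Set ℝ :=
  if x < 0 then {-1} else if 0 < x then {1} else Set.Icc (-1) 1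

/-- Ratio Cheeger cut of the partition `(C, Cᶜ)`. -/
noncomputable def RCC {n : ℕ} (W : Fin n → Fin n → ℝ) (C : Finset (Fin n)) : ℝ :=
  (∑ i ∈ C, ∑ j ∈ Cᶜ, W i j) / min (C.card : ℝ) (Cᶜ.card : ℝ)

/-- `f` is an eigenvector of the graph 1-Laplacian with eigenvalue `lam`. -/
def IsEig1Lap {n : ℕ} (W : Fin n → Fin n → ℝ) (f : Fin n → ℝ) (lam : ℝ) : Prop :=
  ∃ u : Fin n → Fin n → ℝ, (∀ i j, u i j = - u j i) ∧
    (∀ i j, u i j ∈ signSet (f i - f j)) ∧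
    ∃ α : Fin n → ℝ, (∀ i, α i ∈ signSet (f i)) ∧
      ∀ i, ∑ j, W i j * u i j = lam * α i

namespace CheegerAux

lemma signSet_mul {x u : ℝ} (h : u ∈ signSet x) : u * x = |x| := by
  unfold signSet at h
  split_ifs at h with h1 h2
  · simp only [Set.mem_singleton_iff] at h; subst h; rw [abs_of_neg h1]; ring
  · simp only [Set.mem_singleton_iff] at h; subst h; rw [abs_of_pos h2]; ring
  · have : x = 0 := le_antisymm (not_lt.1 h2) (not_lt.1 h1)
    subst this; simp

lemma signSet_Icc {x u : ℝ} (h : u ∈ signSet x) : -1 ≤ u ∧ u ≤ 1 := by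
  unfold signSet at h
  split_ifs at h with h1 h2
  · simp only [Set.mem_singleton_iff] at h; subst h; norm_num
  · simp only [Set.mem_singleton_iff] at h; subst h; norm_num
  · exact ⟨h.1, h.2⟩

lemma signSet_of_pos {x : ℝ} (hx : 0 < x) : signSet x = {1} := by
  unfold signSet; rw [if_neg (by linarith), if_pos hx]

lemma signSet_of_neg {x : ℝ} (hx : x < 0) : signSet x = {-1} := by
  unfold signSet; rw [if_pos hx]

lemma signSet_zero' : signSet 0 = Set.Icc (-1) 1 := by
  unfold signSet; norm_num

lemma convex_signSet (x : ℝ) : Convex ℝ (signSet x) := by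
  unfold signSet; split_ifs
  exacts [convex_singleton _, convex_singleton _, convex_Icc _ _]

lemma isClosed_signSet (x : ℝ) : IsClosed (signSet x) := by
  unfold signSet; split_ifs
  exacts [isClosed_singleton, isClosed_singleton, isClosed_Icc]

noncomputable def rsgn (x : ℝ) : ℝ := if 0 < x then 1 else if x < 0 then -1 else 0

lemma rsgn_mul (x : ℝ) : rsgn x * x = |x| := by
  unfold rsgn; split_ifs with h1 h2
  · rw [abs_of_pos h1]; ring
  · rw [abs_of_neg h2]; ring
  · have : x = 0 := le_antisymm (not_lt.1 h1) (not_lt.1 h2); subst this; simp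

lemma rsgn_neg (x : ℝ) : rsgn (-x) = - rsgn x := by
  unfold rsgn
  rcases lt_trichotomy x 0 with h | h | h
  · rw [if_pos (by linarith : (0:ℝ) < -x), if_neg (by linarith : ¬ (0:ℝ) < x), if_pos h]
    norm_num
  · subst h; norm_num
  · rw [if_neg (by linarith : ¬ (0:ℝ) < -x), if_pos (by linarith : -x < (0:ℝ)), if_pos h]

lemma rsgn_Icc (x : ℝ) : -1 ≤ rsgn x ∧ rsgn x ≤ 1 := by
  unfold rsgn; split_ifs <;> norm_num

/-! ### Layer-cake decomposition over the sorted list of breakpoints -/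

noncomputable def pt (B : Finset ℝ) (k : ℕ) : ℝ := (B.sort (· ≤ ·)).getD k 0

noncomputable def gap (B : Finset ℝ) (k : ℕ) : ℝ := pt B (k + 1) - pt B k

def idx (B : Finset ℝ) : Finset ℕ := Finset.range (B.card - 1)

lemma gap_nonneg (B : Finset ℝ) {k : ℕ} (hk : k ∈ idx B) : 0 ≤ gap B k := by
  have hlen : (B.sort (· ≤ ·)).length = B.card := B.length_sort _
  simp only [idx, Finset.mem_range] at hk
  have hk1 : k + 1 < (B.sort (· ≤ ·)).length := by omega
  have hk0 : k < (B.sort (· ≤ ·)).length := by omega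
  have := (B.pairwise_sort (· ≤ ·)).rel_get_of_lt
    (a := ⟨k, hk0⟩) (b := ⟨k + 1, hk1⟩) (by simp)
  simp only [gap, pt, List.getD_eq_getElem _ _ hk0, List.getD_eq_getElem _ _ hk1]
  simp only [List.get_eq_getElem] at this
  linarith

lemma dec0 (B : Finset ℝ) {p : ℝ} (hp : p ∈ B) :
    ∑ k ∈ idx B, gap B k * (if pt B k < p then 1 else 0) = p - pt B 0 := by
  have hlen : (B.sort (· ≤ ·)).length = B.card := B.length_sort _
  have hmem : p ∈ B.sort (· ≤ ·) := (Finset.mem_sort _).2 hp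
  obtain ⟨k₀, hk₀, hget⟩ := List.getElem_of_mem hmem
  have hcard : 1 ≤ B.card := by
    have := Finset.card_pos.2 ⟨p, hp⟩; omega
  have hk₀le : k₀ ≤ B.card - 1 := by omega
  have key : ∀ k ∈ idx B, gap B k * (if pt B k < p then 1 else 0)
      = if k < k₀ then gap B k else 0 := by
    intro k hk
    simp only [idx, Finset.mem_range] at hk
    have hklen : k < (B.sort (· ≤ ·)).length := by omega
    have hptk : pt B k = (B.sort (· ≤ ·))[k] := List.getD_eq_getElem _ _ hklen
    by_cases hlt : k < k₀
    · have : (B.sort (· ≤ ·))[k] < (B.sort (· ≤ ·))[k₀] := by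
        have := (B.sortedLT_sort.pairwise).rel_get_of_lt (a := ⟨k, hklen⟩) (b := ⟨k₀, hk₀⟩)
          (by simpa using hlt)
        simpa using this
      rw [if_pos hlt, if_pos (by rw [hptk, ← hget] at *; exact this), mul_one]
    · have hle : k₀ ≤ k := not_lt.1 hlt
      have : (B.sort (· ≤ ·))[k₀] ≤ (B.sort (· ≤ ·))[k] := by
        have := (B.pairwise_sort (· ≤ ·)).rel_get_of_le (a := ⟨k₀, hk₀⟩) (b := ⟨k, hklen⟩)
          (by simpa using hle)
        simpa using this
      rw [if_neg hlt, if_neg (by rw [hptk, ← hget]; exact not_lt.2 this), mul_zero]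
  rw [Finset.sum_congr rfl key, ← Finset.sum_filter]
  have hfilter : (idx B).filter (fun k => k < k₀) = Finset.range k₀ := by
    ext k; simp only [idx, Finset.mem_filter, Finset.mem_range]
    constructor
    · rintro ⟨_, h⟩; exact h
    · intro h; exact ⟨by omega, h⟩
  rw [hfilter]
  have htel := Finset.sum_range_sub (fun k => pt B k) k₀
  simp only [gap]
  rw [htel]
  have hpt0 : pt B k₀ = p := by
    rw [pt, List.getD_eq_getElem _ _ hk₀, hget]
  rw [hpt0]

lemma dec_lin (B : Finset ℝ) {p q : ℝ} (hp : p ∈ B) (hq : q ∈ B) :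
    ∑ k ∈ idx B, gap B k * ((if pt B k < p then 1 else 0) - (if pt B k < q then 1 else 0))
      = p - q := by
  have h1 := dec0 B hp
  have h2 := dec0 B hq
  have : ∑ k ∈ idx B, gap B k * ((if pt B k < p then 1 else 0) - (if pt B k < q then 1 else 0))
      = ∑ k ∈ idx B, (gap B k * (if pt B k < p then 1 else 0)
          - gap B k * (if pt B k < q then 1 else 0)) := by
    apply Finset.sum_congr rfl; intro k _; ring
  rw [this, Finset.sum_sub_distrib, h1, h2]; ring

lemma dec_abs (B : Finset ℝ) {p q : ℝ} (hp : p ∈ B) (hq : q ∈ B) :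
    ∑ k ∈ idx B, gap B k * |(if pt B k < p then 1 else 0) - (if pt B k < q then 1 else 0)|
      = |p - q| := by
  rcases le_total q p with hle | hle
  · have key : ∀ k ∈ idx B,
        gap B k * |(if pt B k < p then 1 else 0) - (if pt B k < q then 1 else 0)|
        = gap B k * ((if pt B k < p then 1 else 0) - (if pt B k < q then 1 else 0)) := by
      intro k _
      have hmono : (if pt B k < q then (1:ℝ) else 0) ≤ (if pt B k < p then 1 else 0) := by
        by_cases h2 : pt B k < q
        · rw [if_pos h2, if_pos (lt_of_lt_of_le h2 hle)]
        · rw [if_neg h2]; split_ifs <;> norm_num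
      congr 1
      exact abs_of_nonneg (by linarith)
    rw [Finset.sum_congr rfl key, dec_lin B hp hq, abs_of_nonneg (by linarith)]
  · have key : ∀ k ∈ idx B,
        gap B k * |(if pt B k < p then 1 else 0) - (if pt B k < q then 1 else 0)|
        = gap B k * ((if pt B k < q then 1 else 0) - (if pt B k < p then 1 else 0)) := by
      intro k _
      rw [abs_sub_comm]
      have hmono : (if pt B k < p then (1:ℝ) else 0) ≤ (if pt B k < q then 1 else 0) := by
        by_cases h2 : pt B k < p
        · rw [if_pos h2, if_pos (lt_of_lt_of_le h2 hle)]
        · rw [if_neg h2]; split_ifs <;> norm_num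
      congr 1
      exact abs_of_nonneg (by linarith)
    rw [Finset.sum_congr rfl key, dec_lin B hq hp, abs_sub_comm]
    rw [abs_of_nonneg (by linarith)]

/-! ### Graph cut lemmas -/

variable {n : ℕ}

noncomputable def cutW (W : Fin n → Fin n → ℝ) (S : Finset (Fin n)) : ℝ :=
  ∑ i ∈ S, ∑ j ∈ Sᶜ, W i j

lemma cutW_nonneg (W : Fin n → Fin n → ℝ) (hnn : ∀ i j, 0 ≤ W i j) (S : Finset (Fin n)) :
    0 ≤ cutW W S :=
  Finset.sum_nonneg fun i _ => Finset.sum_nonneg fun j _ => hnn i j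

lemma cutW_compl (W : Fin n → Fin n → ℝ) (hsym : ∀ i j, W i j = W j i) (S : Finset (Fin n)) :
    cutW W Sᶜ = cutW W S := by
  unfold cutW
  rw [compl_compl, Finset.sum_comm]
  exact Finset.sum_congr rfl fun i _ => Finset.sum_congr rfl fun j _ => hsym _ _

noncomputable def chi (S : Finset (Fin n)) (i : Fin n) : ℝ := if i ∈ S then 1 else 0

lemma sum_chi_mul (S : Finset (Fin n)) (g : Fin n → ℝ) :
    ∑ i, chi S i * g i = ∑ i ∈ S, g i := by
  simp [chi, ite_mul, Finset.sum_ite_mem]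

lemma sum_chi_over (T S : Finset (Fin n)) :
    ∑ i ∈ T, chi S i = ((T ∩ S).card : ℝ) := by
  simp [chi, Finset.sum_ite_mem]

lemma chi_compl (S : Finset (Fin n)) (i : Fin n) : chi Sᶜ i = 1 - chi S i := by
  simp only [chi, Finset.mem_compl]
  by_cases h : i ∈ S <;> simp [h]

noncomputable def indp (T : Finset (Fin n)) (i j : Fin n) : ℝ :=
  chi T i * (1 - chi T j) + chi T j * (1 - chi T i)

lemma sum_chichi (W : Fin n → Fin n → ℝ) (T U : Finset (Fin n)) :
    ∑ i, ∑ j, W i j * (chi T i * chi U j) = ∑ i ∈ T, ∑ j ∈ U, W i j := by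
  rw [← sum_chi_mul T (fun i => ∑ j ∈ U, W i j)]
  apply Finset.sum_congr rfl; intro i _
  rw [← sum_chi_mul U (fun j => W i j), Finset.mul_sum]
  apply Finset.sum_congr rfl; intro j _; ring

lemma sum_W_indp (W : Fin n → Fin n → ℝ) (hsym : ∀ i j, W i j = W j i) (T : Finset (Fin n)) :
    ∑ i, ∑ j, W i j * indp T i j = 2 * cutW W T := by
  have split : ∑ i, ∑ j, W i j * indp T i j
      = (∑ i, ∑ j, W i j * (chi T i * chi Tᶜ j)) + ∑ i, ∑ j, W i j * (chi Tᶜ i * chi T j) := by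
    rw [← Finset.sum_add_distrib]
    apply Finset.sum_congr rfl; intro i _
    rw [← Finset.sum_add_distrib]
    apply Finset.sum_congr rfl; intro j _
    rw [indp, chi_compl, chi_compl]; ring
  rw [split, sum_chichi, sum_chichi]
  have h2 : ∑ i ∈ Tᶜ, ∑ j ∈ T, W i j = cutW W T := by
    have := cutW_compl W hsym T
    unfold cutW at this ⊢
    rw [← this, compl_compl]
  rw [h2]
  unfold cutW; ring

lemma abs_chi_sub_chi (S : Finset (Fin n)) (i j : Fin n) :
    |chi S i - chi S j| = indp S i j := by
  by_cases hi : i ∈ S <;> by_cases hj : j ∈ S <;> simp [chi, indp, hi, hj]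

/-! ### Per-level inequalities -/

lemma min_eq_card_left {h : ℝ} (T : Finset (Fin n)) (hT : 2 * T.card ≤ n) :
    min ((T.card : ℝ)) ((Tᶜ.card : ℝ)) = (T.card : ℝ) := by
  have hc : T.card + Tᶜ.card = n := by
    rw [Finset.card_add_card_compl, Fintype.card_fin]
  apply min_eq_left
  have : T.card ≤ Tᶜ.card := by omega
  exact_mod_cast this

lemma min_eq_card_right {h : ℝ} (T : Finset (Fin n)) (hT : 2 * Tᶜ.card ≤ n) :
    min ((T.card : ℝ)) ((Tᶜ.card : ℝ)) = (Tᶜ.card : ℝ) := by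
  have hc : T.card + Tᶜ.card = n := by
    rw [Finset.card_add_card_compl, Fintype.card_fin]
  apply min_eq_right
  have : Tᶜ.card ≤ T.card := by omega
  exact_mod_cast this

lemma level1 {W : Fin n → Fin n → ℝ} (hsym : ∀ i j, W i j = W j i) (h : ℝ)
    (hM : ∀ T : Finset (Fin n), h * min ((T.card : ℝ)) ((Tᶜ.card : ℝ)) ≤ cutW W T)
    (S : Finset (Fin n)) (e : ℝ)
    (hcase : (e = 0 ∧ 2 * S.card ≤ n) ∨ (e = 1 ∧ 2 * Sᶜ.card ≤ n)) :
    h * (2 * ∑ i, |chi S i - e|) ≤ ∑ i, ∑ j, W i j * |chi S i - chi S j| := by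
  have hR : ∑ i, ∑ j, W i j * |chi S i - chi S j| = 2 * cutW W S := by
    rw [← sum_W_indp W hsym S]
    exact Finset.sum_congr rfl fun i _ => Finset.sum_congr rfl fun j _ => by
      rw [abs_chi_sub_chi]
  rw [hR]
  rcases hcase with ⟨he, hS⟩ | ⟨he, hS⟩
  · subst he
    have habs : ∀ i : Fin n, |chi S i - 0| = chi S i := by
      intro i; rw [sub_zero]; exact abs_of_nonneg (by unfold chi; split_ifs <;> norm_num)
    rw [Finset.sum_congr rfl fun i _ => habs i]
    have hsum : ∑ i, chi S i = (S.card : ℝ) := by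
      have := sum_chi_over (Finset.univ) S
      rw [this, Finset.univ_inter]
    rw [hsum]
    have := hM S
    rw [min_eq_card_left (h := h) S hS] at this
    linarith
  · subst he
    have habs : ∀ i : Fin n, |chi S i - 1| = chi Sᶜ i := by
      intro i
      rw [chi_compl]
      rw [abs_sub_comm]
      exact abs_of_nonneg (by unfold chi; split_ifs <;> norm_num)
    rw [Finset.sum_congr rfl fun i _ => habs i]
    have hsum : ∑ i, chi Sᶜ i = ((Sᶜ.card : ℝ)) := by
      have := sum_chi_over (Finset.univ) Sᶜ
      rw [this, Finset.univ_inter]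
    rw [hsum]
    have := hM S
    rw [min_eq_card_right (h := h) S hS] at this
    linarith

noncomputable def rho (C : Finset (Fin n)) (i j : Fin n) (z : Fin n → ℝ) : ℝ :=
  if (i ∈ C ↔ j ∈ C) then |z i - z j| else if i ∈ C then z i - z j else z j - z i

lemma rho_indp (C S : Finset (Fin n)) (e : ℝ) (i j : Fin n) :
    rho C i j (fun i => chi S i - e)
      = indp (C ∩ S) i j + indp (C ∪ S) i j - indp C i j := by
  by_cases hiC : i ∈ C <;> by_cases hjC : j ∈ C <;> by_cases hiS : i ∈ S <;>
    by_cases hjS : j ∈ S <;>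
    simp [rho, indp, chi, hiC, hjC, hiS, hjS, Finset.mem_inter, Finset.mem_union] <;>
    ring_nf <;> norm_num

lemma level2 {W : Fin n → Fin n → ℝ} (hsym : ∀ i j, W i j = W j i)
    (hnn : ∀ i j, 0 ≤ W i j) (h : ℝ) (h0 : 0 ≤ h)
    (hM : ∀ T : Finset (Fin n), h * min ((T.card : ℝ)) ((Tᶜ.card : ℝ)) ≤ cutW W T)
    (C : Finset (Fin n)) (hCle : C.card ≤ Cᶜ.card) (hcutC : cutW W C = h * C.card)
    (S : Finset (Fin n)) (e : ℝ) (he : e = 0 ∨ e = 1) :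
    h * (2 * ((∑ i ∈ C, (chi S i - e)) - ∑ i ∈ Cᶜ, |chi S i - e|))
      ≤ ∑ i, ∑ j, W i j * rho C i j (fun i => chi S i - e) := by
  -- the right-hand side
  have hR : ∑ i, ∑ j, W i j * rho C i j (fun i => chi S i - e)
      = 2 * cutW W (C ∩ S) + 2 * cutW W (C ∪ S) - 2 * cutW W C := by
    have : ∀ i ∈ Finset.univ (α := Fin n), ∀ j ∈ Finset.univ (α := Fin n),
        W i j * rho C i j (fun i => chi S i - e)
          = W i j * indp (C ∩ S) i j + W i j * indp (C ∪ S) i j - W i j * indp C i j := by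
      intro i _ j _; rw [rho_indp]; ring
    calc ∑ i, ∑ j, W i j * rho C i j (fun i => chi S i - e)
        = ∑ i, ∑ j, (W i j * indp (C ∩ S) i j + W i j * indp (C ∪ S) i j
            - W i j * indp C i j) := by
          exact Finset.sum_congr rfl fun i hi => Finset.sum_congr rfl fun j hj => this i hi j hj
      _ = (∑ i, ∑ j, W i j * indp (C ∩ S) i j) + (∑ i, ∑ j, W i j * indp (C ∪ S) i j)
            - ∑ i, ∑ j, W i j * indp C i j := by
          simp [Finset.sum_add_distrib, Finset.sum_sub_distrib]
      _ = 2 * cutW W (C ∩ S) + 2 * cutW W (C ∪ S) - 2 * cutW W C := by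
          rw [sum_W_indp W hsym, sum_W_indp W hsym, sum_W_indp W hsym]
  rw [hR]
  -- cardinalities
  have hcc : C.card + Cᶜ.card = n := by
    rw [Finset.card_add_card_compl, Fintype.card_fin]
  have haC : (C ∩ S).card ≤ C.card := Finset.card_le_card Finset.inter_subset_left
  have hbC : (Cᶜ ∩ S).card ≤ Cᶜ.card := Finset.card_le_card Finset.inter_subset_left
  have hunion : (C ∪ S) = C ∪ (Cᶜ ∩ S) := by
    ext x
    simp only [Finset.mem_union, Finset.mem_inter, Finset.mem_compl]
    tauto
  have hcardU : (C ∪ S).card = C.card + (Cᶜ ∩ S).card := by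
    rw [hunion]
    exact Finset.card_union_of_disjoint
      (Finset.disjoint_left.2 fun a ha hb =>
        (Finset.mem_compl.1 (Finset.mem_inter.1 hb).1) ha)
  have hccU : (C ∪ S).card + (C ∪ S)ᶜ.card = n := by
    rw [Finset.card_add_card_compl, Fintype.card_fin]
  -- inequality for A := C ∩ S
  have hA : h * (((C ∩ S).card : ℝ)) ≤ cutW W (C ∩ S) := by
    have := hM (C ∩ S)
    rwa [min_eq_card_left (h := h) (C ∩ S) (by omega)] at this
  -- inequality for C ∪ S
  have hCB : h * ((C.card : ℝ) - ((Cᶜ ∩ S).card : ℝ)) ≤ cutW W (C ∪ S) := by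
    have hmin := hM (C ∪ S)
    have hle : (C.card : ℝ) - ((Cᶜ ∩ S).card : ℝ)
        ≤ min (((C ∪ S).card : ℝ)) ((((C ∪ S)ᶜ).card : ℝ)) := by
      apply le_min
      · have : (C.card : ℝ) ≤ ((C ∪ S).card : ℝ) := by
          exact_mod_cast Finset.card_le_card Finset.subset_union_left
        have hb0 : (0:ℝ) ≤ ((Cᶜ ∩ S).card : ℝ) := by positivity
        linarith
      · have : C.card + ((C ∪ S)ᶜ).card + (Cᶜ ∩ S).card = n := by omega
        have h2 : (C.card : ℝ) + (((C ∪ S)ᶜ).card : ℝ) + ((Cᶜ ∩ S).card : ℝ) = n := by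
          exact_mod_cast this
        have h3 : (C.card : ℝ) ≤ ((Cᶜ.card : ℝ)) := by exact_mod_cast hCle
        have h4 : (C.card : ℝ) + (Cᶜ.card : ℝ) = n := by exact_mod_cast hcc
        linarith
    calc h * ((C.card : ℝ) - ((Cᶜ ∩ S).card : ℝ))
        ≤ h * min (((C ∪ S).card : ℝ)) ((((C ∪ S)ᶜ).card : ℝ)) :=
          mul_le_mul_of_nonneg_left hle h0
      _ ≤ cutW W (C ∪ S) := hmin
  -- the left-hand side
  have hsumC : ∑ i ∈ C, (chi S i - e) = ((C ∩ S).card : ℝ) - e * C.card := by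
    rw [Finset.sum_sub_distrib, sum_chi_over, Finset.sum_const]
    simp [mul_comm]
  rcases he with he | he
  · subst he
    have habs : ∀ i ∈ Cᶜ, |chi S i - 0| = chi S i := by
      intro i _; rw [sub_zero]; exact abs_of_nonneg (by unfold chi; split_ifs <;> norm_num)
    rw [Finset.sum_congr rfl habs, hsumC, sum_chi_over]
    have e3 : (0:ℝ) ≤ ((Cᶜ ∩ S).card : ℝ) := by positivity
    have hCb : h * (((Cᶜ ∩ S).card : ℝ)) ≤ h * ((Cᶜ.card : ℝ)) := by
      apply mul_le_mul_of_nonneg_left _ h0; exact_mod_cast hbC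
    nlinarith [hA, hCB]
  · subst he
    have habs : ∀ i ∈ Cᶜ, |chi S i - 1| = 1 - chi S i := by
      intro i _
      rw [abs_sub_comm]
      exact abs_of_nonneg (by unfold chi; split_ifs <;> norm_num)
    rw [Finset.sum_congr rfl habs, hsumC]
    have hsplit : ∑ i ∈ Cᶜ, (1 - chi S i) = ((Cᶜ.card : ℝ)) - ((Cᶜ ∩ S).card : ℝ) := by
      rw [Finset.sum_sub_distrib, sum_chi_over, Finset.sum_const]
      simp
    rw [hsplit]
    have hCb : h * (((Cᶜ ∩ S).card : ℝ)) ≤ h * ((Cᶜ.card : ℝ)) := by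
      apply mul_le_mul_of_nonneg_left _ h0; exact_mod_cast hbC
    have hcut0 : 0 ≤ cutW W (C ∪ S) := cutW_nonneg W hnn _
    nlinarith [hA]

/-! ### Master inequalities via layer-cake decomposition -/

lemma master1 {W : Fin n → Fin n → ℝ} (hsym : ∀ i j, W i j = W j i) (h : ℝ)
    (hM : ∀ T : Finset (Fin n), h * min ((T.card : ℝ)) ((Tᶜ.card : ℝ)) ≤ cutW W T)
    (y : Fin n → ℝ)
    (hP : 2 * (Finset.univ.filter (fun i => 0 < y i)).card ≤ n)
    (hN : 2 * (Finset.univ.filter (fun i => y i < 0)).card ≤ n) :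
    h * (2 * ∑ i, |y i|) ≤ ∑ i, ∑ j, W i j * |y i - y j| := by
  classical
  set B : Finset ℝ := insert 0 (Finset.image y Finset.univ) with hB
  have h0B : (0:ℝ) ∈ B := Finset.mem_insert_self _ _
  have hyB : ∀ i, y i ∈ B := fun i =>
    Finset.mem_insert_of_mem (Finset.mem_image_of_mem y (Finset.mem_univ i))
  set Sk : ℕ → Finset (Fin n) := fun k => Finset.univ.filter (fun i => pt B k < y i) with hSk
  set ek : ℕ → ℝ := fun k => if pt B k < 0 then 1 else 0 with hek
  have hchi : ∀ k i, chi (Sk k) i = if pt B k < y i then 1 else 0 := by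
    intro k i; simp [chi, hSk, Finset.mem_filter]
  have Habs : ∀ i, |y i| = ∑ k ∈ idx B, gap B k * |chi (Sk k) i - ek k| := by
    intro i
    have hd := dec_abs B (hyB i) h0B
    rw [sub_zero] at hd
    rw [← hd]
    exact Finset.sum_congr rfl fun k _ => by rw [hchi, hek]
  have Habs2 : ∀ i j, |y i - y j|
      = ∑ k ∈ idx B, gap B k * |chi (Sk k) i - chi (Sk k) j| := by
    intro i j
    have hd := dec_abs B (hyB i) (hyB j)
    rw [← hd]
    exact Finset.sum_congr rfl fun k _ => by rw [hchi, hchi]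
  have e1 : ∑ i, |y i| = ∑ k ∈ idx B, gap B k * ∑ i, |chi (Sk k) i - ek k| := by
    rw [Finset.sum_congr rfl fun i (_ : i ∈ Finset.univ) => Habs i, Finset.sum_comm]
    exact Finset.sum_congr rfl fun k _ => (Finset.mul_sum _ _ _).symm
  have e2 : ∑ i, ∑ j, W i j * |y i - y j|
      = ∑ k ∈ idx B, gap B k * ∑ i, ∑ j, W i j * |chi (Sk k) i - chi (Sk k) j| := by
    have step : ∀ i j : Fin n, W i j * |y i - y j|
        = ∑ k ∈ idx B, gap B k * (W i j * |chi (Sk k) i - chi (Sk k) j|) := by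
      intro i j
      rw [Habs2 i j, Finset.mul_sum]
      exact Finset.sum_congr rfl fun k _ => by ring
    calc ∑ i, ∑ j, W i j * |y i - y j|
        = ∑ i, ∑ j, ∑ k ∈ idx B, gap B k * (W i j * |chi (Sk k) i - chi (Sk k) j|) :=
          Finset.sum_congr rfl fun i _ => Finset.sum_congr rfl fun j _ => step i j
      _ = ∑ i : Fin n, ∑ k ∈ idx B, ∑ j, gap B k * (W i j * |chi (Sk k) i - chi (Sk k) j|) :=
          Finset.sum_congr rfl fun i _ => Finset.sum_comm
      _ = ∑ k ∈ idx B, ∑ i : Fin n, ∑ j, gap B k * (W i j * |chi (Sk k) i - chi (Sk k) j|) :=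
          Finset.sum_comm
      _ = ∑ k ∈ idx B, gap B k * ∑ i, ∑ j, W i j * |chi (Sk k) i - chi (Sk k) j| := by
          apply Finset.sum_congr rfl; intro k _
          rw [Finset.mul_sum]
          exact Finset.sum_congr rfl fun i _ => (Finset.mul_sum _ _ _).symm
  rw [e1, e2]
  have e3 : h * (2 * ∑ k ∈ idx B, gap B k * ∑ i, |chi (Sk k) i - ek k|)
      = ∑ k ∈ idx B, gap B k * (h * (2 * ∑ i, |chi (Sk k) i - ek k|)) := by
    rw [Finset.mul_sum, Finset.mul_sum]
    exact Finset.sum_congr rfl fun k _ => by ring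
  rw [e3]
  apply Finset.sum_le_sum
  intro k hk
  apply mul_le_mul_of_nonneg_left _ (gap_nonneg B hk)
  apply level1 hsym h hM
  by_cases hlt : pt B k < 0
  · right
    constructor
    · rw [hek]; simp [hlt]
    · have hsub : (Sk k)ᶜ ⊆ Finset.univ.filter (fun i => y i < 0) := by
        intro i hi
        simp only [hSk, Finset.mem_compl, Finset.mem_filter, Finset.mem_univ,
          true_and, not_lt] at hi ⊢
        linarith
      have := Finset.card_le_card hsub
      omega
  · left
    constructor
    · rw [hek]; simp [hlt]
    · have hsub : Sk k ⊆ Finset.univ.filter (fun i => 0 < y i) := by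
        intro i hi
        simp only [hSk, Finset.mem_filter, Finset.mem_univ, true_and] at hi ⊢
        push_neg at hlt
        linarith
      have := Finset.card_le_card hsub
      omega

lemma master2 {W : Fin n → Fin n → ℝ} (hsym : ∀ i j, W i j = W j i)
    (hnn : ∀ i j, 0 ≤ W i j) (h : ℝ) (h0 : 0 ≤ h)
    (hM : ∀ T : Finset (Fin n), h * min ((T.card : ℝ)) ((Tᶜ.card : ℝ)) ≤ cutW W T)
    (C : Finset (Fin n)) (hCle : C.card ≤ Cᶜ.card) (hcutC : cutW W C = h * C.card)
    (y : Fin n → ℝ) :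
    h * (2 * ((∑ i ∈ C, y i) - ∑ i ∈ Cᶜ, |y i|)) ≤ ∑ i, ∑ j, W i j * rho C i j y := by
  classical
  set B : Finset ℝ := insert 0 (Finset.image y Finset.univ) with hB
  have h0B : (0:ℝ) ∈ B := Finset.mem_insert_self _ _
  have hyB : ∀ i, y i ∈ B := fun i =>
    Finset.mem_insert_of_mem (Finset.mem_image_of_mem y (Finset.mem_univ i))
  set Sk : ℕ → Finset (Fin n) := fun k => Finset.univ.filter (fun i => pt B k < y i) with hSk
  set ek : ℕ → ℝ := fun k => if pt B k < 0 then 1 else 0 with hek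
  have hchi : ∀ k i, chi (Sk k) i = if pt B k < y i then 1 else 0 := by
    intro k i; simp [chi, hSk, Finset.mem_filter]
  have Hy : ∀ i, y i = ∑ k ∈ idx B, gap B k * (chi (Sk k) i - ek k) := by
    intro i
    have hd := dec_lin B (hyB i) h0B
    rw [sub_zero] at hd
    rw [← hd]
    exact Finset.sum_congr rfl fun k _ => by rw [hchi, hek]
  have Habs : ∀ i, |y i| = ∑ k ∈ idx B, gap B k * |chi (Sk k) i - ek k| := by
    intro i
    have hd := dec_abs B (hyB i) h0B
    rw [sub_zero] at hd
    rw [← hd]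
    exact Finset.sum_congr rfl fun k _ => by rw [hchi, hek]
  have Hrho : ∀ i j, rho C i j y
      = ∑ k ∈ idx B, gap B k * rho C i j (fun i => chi (Sk k) i - ek k) := by
    intro i j
    by_cases hc : (i ∈ C ↔ j ∈ C)
    · have lhs : rho C i j y = |y i - y j| := by rw [rho, if_pos hc]
      have rhs : ∀ k, rho C i j (fun i => chi (Sk k) i - ek k)
          = |chi (Sk k) i - chi (Sk k) j| := by
        intro k
        rw [rho, if_pos hc]
        congr 1; ring
      rw [lhs, Finset.sum_congr rfl fun k _ => by rw [rhs]]
      have hd := dec_abs B (hyB i) (hyB j)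
      rw [← hd]
      exact Finset.sum_congr rfl fun k _ => by rw [hchi, hchi]
    · by_cases hic : i ∈ C
      · have lhs : rho C i j y = y i - y j := by rw [rho, if_neg hc, if_pos hic]
        have rhs : ∀ k, rho C i j (fun i => chi (Sk k) i - ek k)
            = chi (Sk k) i - chi (Sk k) j := by
          intro k; rw [rho, if_neg hc, if_pos hic]; ring
        rw [lhs, Finset.sum_congr rfl fun k _ => by rw [rhs]]
        have hd := dec_lin B (hyB i) (hyB j)
        rw [← hd]
        exact Finset.sum_congr rfl fun k _ => by rw [hchi, hchi]
      · have lhs : rho C i j y = y j - y i := by rw [rho, if_neg hc, if_neg hic]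
        have rhs : ∀ k, rho C i j (fun i => chi (Sk k) i - ek k)
            = chi (Sk k) j - chi (Sk k) i := by
          intro k; rw [rho, if_neg hc, if_neg hic]; ring
        rw [lhs, Finset.sum_congr rfl fun k _ => by rw [rhs]]
        have hd := dec_lin B (hyB j) (hyB i)
        rw [← hd]
        exact Finset.sum_congr rfl fun k _ => by rw [hchi, hchi]
  have e1 : ∑ i ∈ C, y i = ∑ k ∈ idx B, gap B k * ∑ i ∈ C, (chi (Sk k) i - ek k) := by
    rw [Finset.sum_congr rfl fun i (_ : i ∈ C) => Hy i, Finset.sum_comm]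
    exact Finset.sum_congr rfl fun k _ => (Finset.mul_sum _ _ _).symm
  have e2 : ∑ i ∈ Cᶜ, |y i| = ∑ k ∈ idx B, gap B k * ∑ i ∈ Cᶜ, |chi (Sk k) i - ek k| := by
    rw [Finset.sum_congr rfl fun i (_ : i ∈ Cᶜ) => Habs i, Finset.sum_comm]
    exact Finset.sum_congr rfl fun k _ => (Finset.mul_sum _ _ _).symm
  have e3 : ∑ i, ∑ j, W i j * rho C i j y
      = ∑ k ∈ idx B, gap B k *
          ∑ i, ∑ j, W i j * rho C i j (fun i => chi (Sk k) i - ek k) := by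
    have step : ∀ i j : Fin n, W i j * rho C i j y
        = ∑ k ∈ idx B, gap B k * (W i j * rho C i j (fun i => chi (Sk k) i - ek k)) := by
      intro i j
      rw [Hrho i j, Finset.mul_sum]
      exact Finset.sum_congr rfl fun k _ => by ring
    calc ∑ i, ∑ j, W i j * rho C i j y
        = ∑ i, ∑ j, ∑ k ∈ idx B,
            gap B k * (W i j * rho C i j (fun i => chi (Sk k) i - ek k)) :=
          Finset.sum_congr rfl fun i _ => Finset.sum_congr rfl fun j _ => step i j
      _ = ∑ i : Fin n, ∑ k ∈ idx B, ∑ j,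
            gap B k * (W i j * rho C i j (fun i => chi (Sk k) i - ek k)) :=
          Finset.sum_congr rfl fun i _ => Finset.sum_comm
      _ = ∑ k ∈ idx B, ∑ i : Fin n, ∑ j,
            gap B k * (W i j * rho C i j (fun i => chi (Sk k) i - ek k)) :=
          Finset.sum_comm
      _ = ∑ k ∈ idx B, gap B k *
            ∑ i, ∑ j, W i j * rho C i j (fun i => chi (Sk k) i - ek k) := by
          apply Finset.sum_congr rfl; intro k _
          rw [Finset.mul_sum]
          exact Finset.sum_congr rfl fun i _ => (Finset.mul_sum _ _ _).symm
  rw [e1, e2, e3]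
  have e4 : h * (2 * ((∑ k ∈ idx B, gap B k * ∑ i ∈ C, (chi (Sk k) i - ek k))
        - ∑ k ∈ idx B, gap B k * ∑ i ∈ Cᶜ, |chi (Sk k) i - ek k|))
      = ∑ k ∈ idx B, gap B k * (h * (2 * ((∑ i ∈ C, (chi (Sk k) i - ek k))
          - ∑ i ∈ Cᶜ, |chi (Sk k) i - ek k|))) := by
    rw [← Finset.sum_sub_distrib, Finset.mul_sum, Finset.mul_sum]
    exact Finset.sum_congr rfl fun k _ => by ring
  rw [e4]
  apply Finset.sum_le_sum
  intro k hk
  apply mul_le_mul_of_nonneg_left _ (gap_nonneg B hk)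
  apply level2 hsym hnn h h0 hM C hCle hcutC
  by_cases hlt : pt B k < 0
  · right; rw [hek]; simp [hlt]
  · left; rw [hek]; simp [hlt]

/-! ### Antisymmetric double sums -/

lemma sum_antisym_mul {a : Fin n → Fin n → ℝ} (ha : ∀ i j, a i j = - a j i) (y : Fin n → ℝ) :
    ∑ i, ∑ j, a i j * (y i - y j) = 2 * ∑ i, (∑ j, a i j) * y i := by
  have h1 : ∑ i, ∑ j, a i j * y j = - ∑ i, ∑ j, a i j * y i := by
    rw [Finset.sum_comm]
    calc ∑ j, ∑ i, a i j * y j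
        = ∑ j, ∑ i, -(a j i * y j) :=
          Finset.sum_congr rfl fun j _ => Finset.sum_congr rfl fun i _ => by
            rw [ha i j]; ring
      _ = - ∑ j, ∑ i, a j i * y j := by simp
  have h2 : ∑ i, ∑ j, a i j * (y i - y j)
      = (∑ i, ∑ j, a i j * y i) - ∑ i, ∑ j, a i j * y j := by
    simp only [← Finset.sum_sub_distrib]
    exact Finset.sum_congr rfl fun i _ => Finset.sum_congr rfl fun j _ => by ring
  rw [h2, h1]
  have h3 : ∑ i, (∑ j, a i j) * y i = ∑ i, ∑ j, a i j * y i :=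
    Finset.sum_congr rfl fun i _ => Finset.sum_mul _ _ _
  rw [h3]; ring

lemma sum_antisym_zero {a : Fin n → Fin n → ℝ} (ha : ∀ i j, a i j = - a j i) :
    ∑ i, ∑ j, a i j = 0 := by
  have h1 : ∑ i, ∑ j, a i j = - ∑ i, ∑ j, a i j := by
    nth_rewrite 1 [Finset.sum_comm]
    calc ∑ j, ∑ i, a i j
        = ∑ j, ∑ i, -(a j i) :=
          Finset.sum_congr rfl fun j _ => Finset.sum_congr rfl fun i _ => ha i j
      _ = - ∑ j, ∑ i, a j i := by simp
  linarith

/-! ### The lower bound: every nonconstant eigenvalue is at least `h` -/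

lemma lower_bound {W : Fin n → Fin n → ℝ} (hn : 2 ≤ n)
    (hsym : ∀ i j, W i j = W j i) (hnn : ∀ i j, 0 ≤ W i j)
    (hconn : ∀ C : Finset (Fin n), C.Nonempty → C ≠ Finset.univ →
      0 < ∑ i ∈ C, ∑ j ∈ Cᶜ, W i j)
    (h : ℝ)
    (hM : ∀ T : Finset (Fin n), h * min ((T.card : ℝ)) ((Tᶜ.card : ℝ)) ≤ cutW W T)
    (f : Fin n → ℝ) (hnc : ¬ ∃ c : ℝ, ∀ i, f i = c)
    (lam : ℝ) (heig : IsEig1Lap W f lam) : h ≤ lam := by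
  classical
  obtain ⟨u, hua, hus, α, hαs, heq⟩ := heig
  have hufd : ∀ i j, u i j * (f i - f j) = |f i - f j| := fun i j => signSet_mul (hus i j)
  have hαf : ∀ i, α i * f i = |f i| := fun i => signSet_mul (hαs i)
  set a : Fin n → Fin n → ℝ := fun i j => W i j * u i j with haa
  have haan : ∀ i j, a i j = - a j i := by
    intro i j; simp only [haa]; rw [hsym i j, hua i j]; ring
  have hrowsum : ∀ i, ∑ j, a i j = lam * α i := fun i => heq i
  have key : ∑ i, ∑ j, W i j * |f i - f j| = 2 * (lam * ∑ i, |f i|) := by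
    calc ∑ i, ∑ j, W i j * |f i - f j|
        = ∑ i, ∑ j, a i j * (f i - f j) := by
          refine Finset.sum_congr rfl fun i _ => Finset.sum_congr rfl fun j _ => ?_
          simp only [haa]; rw [← hufd i j]; ring
      _ = 2 * ∑ i, (∑ j, a i j) * f i := sum_antisym_mul haan f
      _ = 2 * ∑ i, lam * |f i| := by
          congr 1
          refine Finset.sum_congr rfl fun i _ => ?_
          rw [hrowsum i, ← hαf i]; ring
      _ = 2 * (lam * ∑ i, |f i|) := by rw [← Finset.mul_sum]
  have hzero : lam * ∑ i, α i = 0 := by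
    have h0 := sum_antisym_zero haan
    have h1 : ∑ i, ∑ j, a i j = ∑ i, lam * α i :=
      Finset.sum_congr rfl fun i _ => hrowsum i
    rw [h1, ← Finset.mul_sum] at h0
    exact h0
  -- nonconstancy facts
  have hne : (Finset.univ : Finset (Fin n)).Nonempty :=
    ⟨⟨0, by omega⟩, Finset.mem_univ _⟩
  obtain ⟨i₀, -, hi₀⟩ := Finset.exists_min_image Finset.univ f hne
  have hi₀' : ∀ j, f i₀ ≤ f j := fun j => hi₀ j (Finset.mem_univ j)
  have hexj : ∃ j, f i₀ < f j := by
    by_contra hno; push_neg at hno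
    exact hnc ⟨f i₀, fun i => le_antisymm (hno i) (hi₀' i)⟩
  set T := Finset.univ.filter (fun i => f i₀ < f i) with hT
  have hTne : T.Nonempty := by
    obtain ⟨j, hj⟩ := hexj
    exact ⟨j, by simp [hT, hj]⟩
  have hTnu : T ≠ Finset.univ := by
    intro habs
    have : i₀ ∈ T := habs ▸ Finset.mem_univ i₀
    simp [hT] at this
  have hQpos : 0 < ∑ i, ∑ j, W i j * |f i - f j| := by
    by_contra hle; push_neg at hle
    have hQ0 : ∑ i, ∑ j, W i j * |f i - f j| = 0 :=
      le_antisymm hle (Finset.sum_nonneg fun i _ => Finset.sum_nonneg fun j _ =>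
        mul_nonneg (hnn i j) (abs_nonneg _))
    have hterm : ∀ i j : Fin n, W i j * |f i - f j| = 0 := by
      intro i j
      have h1 := (Finset.sum_eq_zero_iff_of_nonneg (fun i _ =>
        Finset.sum_nonneg fun j _ => mul_nonneg (hnn i j) (abs_nonneg _))).1 hQ0 i
        (Finset.mem_univ i)
      exact (Finset.sum_eq_zero_iff_of_nonneg (fun j _ =>
        mul_nonneg (hnn i j) (abs_nonneg _))).1 h1 j (Finset.mem_univ j)
    have hcut := hconn T hTne hTnu
    have hzero2 : ∑ i ∈ T, ∑ j ∈ Tᶜ, W i j = 0 := by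
      apply Finset.sum_eq_zero; intro i hi
      apply Finset.sum_eq_zero; intro j hj
      have hfi : f i₀ < f i := (Finset.mem_filter.1 hi).2
      have hfj : f j ≤ f i₀ := by
        have := Finset.mem_compl.1 hj
        simp only [hT, Finset.mem_filter, Finset.mem_univ, true_and, not_lt] at this
        exact this
      have habs : |f i - f j| ≠ 0 :=
        abs_ne_zero.2 (sub_ne_zero_of_ne (by intro hfeq; rw [hfeq] at hfi; linarith))
      rcases mul_eq_zero.1 (hterm i j) with hW | hW
      · exact hW
      · exact absurd hW habs
    linarith
  have hfabs_pos : 0 < ∑ i, |f i| := by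
    rcases lt_or_eq_of_le (Finset.sum_nonneg fun i _ => abs_nonneg (f i)) with hlt | heq0
    · exact hlt
    · rw [← heq0] at key; rw [mul_zero, mul_zero] at key; linarith
  have hlam_pos : 0 < lam := by nlinarith
  have hαsum : ∑ i, α i = 0 := by
    rcases mul_eq_zero.1 hzero with h' | h'
    · exact absurd h' (ne_of_gt hlam_pos)
    · exact h'
  set P := Finset.univ.filter (fun i => 0 < f i) with hP
  set N := Finset.univ.filter (fun i => f i < 0) with hN
  have hsumP : ∑ i, chi P i = (P.card : ℝ) := by
    have := sum_chi_over (Finset.univ) P; rwa [Finset.univ_inter] at this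
  have hsumN : ∑ i, chi N i = (N.card : ℝ) := by
    have := sum_chi_over (Finset.univ) N; rwa [Finset.univ_inter] at this
  have hcardn : ((Finset.univ : Finset (Fin n)).card : ℝ) = n := by
    rw [Finset.card_univ, Fintype.card_fin]
  have hPb : 2 * P.card ≤ n := by
    have hge : ∀ i ∈ (Finset.univ : Finset (Fin n)), 2 * chi P i - 1 ≤ α i := by
      intro i _
      by_cases hp : 0 < f i
      · have hchiP : chi P i = 1 := by simp [chi, hP, Finset.mem_filter, hp]
        have hα := hαs i
        rw [signSet_of_pos hp, Set.mem_singleton_iff] at hα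
        rw [hα, hchiP]; norm_num
      · have hchiP : chi P i = 0 := by simp [chi, hP, Finset.mem_filter, hp]
        have := (signSet_Icc (hαs i)).1
        rw [hchiP]; linarith
    have hsum := Finset.sum_le_sum hge
    rw [hαsum] at hsum
    have hlhs : ∑ i : Fin n, (2 * chi P i - 1) = 2 * (P.card : ℝ) - n := by
      rw [Finset.sum_sub_distrib, ← Finset.mul_sum, hsumP, Finset.sum_const]
      simp [Fintype.card_fin]
    rw [hlhs] at hsum
    have : 2 * (P.card : ℝ) ≤ n := by linarith
    exact_mod_cast this
  have hNb : 2 * N.card ≤ n := by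
    have hge : ∀ i ∈ (Finset.univ : Finset (Fin n)), α i ≤ 1 - 2 * chi N i := by
      intro i _
      by_cases hp : f i < 0
      · have hchiN : chi N i = 1 := by simp [chi, hN, Finset.mem_filter, hp]
        have hα := hαs i
        rw [signSet_of_neg hp, Set.mem_singleton_iff] at hα
        rw [hα, hchiN]; norm_num
      · have hchiN : chi N i = 0 := by simp [chi, hN, Finset.mem_filter, hp]
        have := (signSet_Icc (hαs i)).2
        rw [hchiN]; linarith
    have hsum := Finset.sum_le_sum hge
    rw [hαsum] at hsum
    have hlhs : ∑ i : Fin n, (1 - 2 * chi N i) = (n : ℝ) - 2 * N.card := by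
      rw [Finset.sum_sub_distrib, ← Finset.mul_sum, hsumN, Finset.sum_const]
      simp [Fintype.card_fin]
    rw [hlhs] at hsum
    have : 2 * (N.card : ℝ) ≤ n := by linarith
    exact_mod_cast this
  have hmaster := master1 hsym h hM f hPb hNb
  nlinarith

/-! ### Membership: `h` is attained by the indicator eigenvector -/

lemma membership {W : Fin n → Fin n → ℝ}
    (hsym : ∀ i j, W i j = W j i) (hnn : ∀ i j, 0 ≤ W i j) (h : ℝ) (h0 : 0 ≤ h)
    (hM : ∀ T : Finset (Fin n), h * min ((T.card : ℝ)) ((Tᶜ.card : ℝ)) ≤ cutW W T)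
    (C : Finset (Fin n)) (hCne : C.Nonempty) (hCnu : C ≠ Finset.univ)
    (hCle : C.card ≤ Cᶜ.card) (hcutC : cutW W C = h * C.card) :
    ∃ f : Fin n → ℝ, (¬ ∃ c : ℝ, ∀ i, f i = c) ∧ IsEig1Lap W f h := by
  classical
  set f : Fin n → ℝ := fun i => chi C i with hf
  have hCcne : Cᶜ.Nonempty := by
    rw [Finset.nonempty_iff_ne_empty]
    intro habs
    exact hCnu (by simpa using congrArg compl habs)
  have hfval : ∀ i, (i ∈ C → f i = 1) ∧ (i ∉ C → f i = 0) := by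
    intro i; constructor <;> intro hi <;> simp [hf, chi, hi]
  refine ⟨f, ?_, ?_⟩
  · rintro ⟨c, hc⟩
    obtain ⟨i₀, hi₀⟩ := hCne
    obtain ⟨j₀, hj₀⟩ := hCcne
    have h1 : f i₀ = 1 := (hfval i₀).1 hi₀
    have h2 : f j₀ = 0 := (hfval j₀).2 (Finset.mem_compl.1 hj₀)
    rw [hc i₀] at h1; rw [hc j₀] at h2; linarith
  · by_contra hno
    set K : Set ((Fin n → Fin n → ℝ) × (Fin n → ℝ)) :=
      {p | (∀ i j, p.1 i j = - p.1 j i) ∧ (∀ i j, p.1 i j ∈ signSet (f i - f j)) ∧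
           (∀ i, p.2 i ∈ signSet (f i))} with hK
    set Φ : ((Fin n → Fin n → ℝ) × (Fin n → ℝ)) → (Fin n → ℝ) :=
      fun p => fun i => (∑ j, W i j * p.1 i j) - h * p.2 i with hΦ
    have h0notin : (0 : Fin n → ℝ) ∉ Φ '' K := by
      rintro ⟨⟨u, α⟩, ⟨hua, hus, hαs⟩, hΦ0⟩
      apply hno
      refine ⟨u, hua, hus, α, hαs, fun i => ?_⟩
      have := congrFun hΦ0 i
      simp only [hΦ, Pi.zero_apply] at this
      linarith
    have hKb : Bornology.IsBounded K := by
      apply (Metric.isBounded_closedBall (x := (0 : (Fin n → Fin n → ℝ) × (Fin n → ℝ)))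
        (r := 1)).subset
      intro p hp
      rw [Metric.mem_closedBall, dist_zero_right, Prod.norm_def]
      apply max_le
      · rw [pi_norm_le_iff_of_nonneg zero_le_one]
        intro i
        rw [pi_norm_le_iff_of_nonneg zero_le_one]
        intro j
        rw [Real.norm_eq_abs, abs_le]
        exact signSet_Icc (hp.2.1 i j)
      · rw [pi_norm_le_iff_of_nonneg zero_le_one]
        intro i
        rw [Real.norm_eq_abs, abs_le]
        exact signSet_Icc (hp.2.2 i)
    have hKc : IsClosed K := by
      have h1 : IsClosed {p : (Fin n → Fin n → ℝ) × (Fin n → ℝ) |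
          ∀ i j, p.1 i j = - p.1 j i} := by
        have heqset : {p : (Fin n → Fin n → ℝ) × (Fin n → ℝ) | ∀ i j, p.1 i j = - p.1 j i}
            = ⋂ (i : Fin n), ⋂ (j : Fin n),
              {p : (Fin n → Fin n → ℝ) × (Fin n → ℝ) | p.1 i j = - p.1 j i} := by
          ext p; simp [Set.mem_iInter]
        rw [heqset]
        refine isClosed_iInter fun i => isClosed_iInter fun j => ?_
        have c1 : Continuous (fun p : (Fin n → Fin n → ℝ) × (Fin n → ℝ) => p.1 i j) :=
          (continuous_apply j).comp ((continuous_apply i).comp continuous_fst)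
        have c2 : Continuous (fun p : (Fin n → Fin n → ℝ) × (Fin n → ℝ) => p.1 j i) :=
          (continuous_apply i).comp ((continuous_apply j).comp continuous_fst)
        exact isClosed_eq c1 c2.neg
      have h2 : IsClosed {p : (Fin n → Fin n → ℝ) × (Fin n → ℝ) |
          ∀ i j, p.1 i j ∈ signSet (f i - f j)} := by
        have heqset : {p : (Fin n → Fin n → ℝ) × (Fin n → ℝ) |
            ∀ i j, p.1 i j ∈ signSet (f i - f j)}
            = ⋂ (i : Fin n), ⋂ (j : Fin n),
              {p : (Fin n → Fin n → ℝ) × (Fin n → ℝ) | p.1 i j ∈ signSet (f i - f j)} := by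
          ext p; simp [Set.mem_iInter]
        rw [heqset]
        refine isClosed_iInter fun i => isClosed_iInter fun j => ?_
        exact (isClosed_signSet _).preimage
          ((continuous_apply j).comp ((continuous_apply i).comp continuous_fst))
      have h3 : IsClosed {p : (Fin n → Fin n → ℝ) × (Fin n → ℝ) |
          ∀ i, p.2 i ∈ signSet (f i)} := by
        have heqset : {p : (Fin n → Fin n → ℝ) × (Fin n → ℝ) | ∀ i, p.2 i ∈ signSet (f i)}
            = ⋂ (i : Fin n),
              {p : (Fin n → Fin n → ℝ) × (Fin n → ℝ) | p.2 i ∈ signSet (f i)} := by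
          ext p; simp [Set.mem_iInter]
        rw [heqset]
        exact isClosed_iInter fun i => (isClosed_signSet _).preimage
          ((continuous_apply i).comp continuous_snd)
      have hKeq : K = {p : (Fin n → Fin n → ℝ) × (Fin n → ℝ) | ∀ i j, p.1 i j = - p.1 j i}
          ∩ ({p | ∀ i j, p.1 i j ∈ signSet (f i - f j)} ∩ {p | ∀ i, p.2 i ∈ signSet (f i)}) := by
        ext p
        simp only [hK, Set.mem_inter_iff, Set.mem_setOf_eq, and_assoc]
      rw [hKeq]
      exact h1.inter (h2.inter h3)
    have hKcomp : IsCompact K := Metric.isCompact_of_isClosed_isBounded hKc hKb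
    have hΦcont : Continuous Φ := by
      apply continuous_pi; intro i
      apply Continuous.sub
      · exact continuous_finset_sum _ fun j _ =>
          continuous_const.mul ((continuous_apply j).comp
            ((continuous_apply i).comp continuous_fst))
      · exact continuous_const.mul ((continuous_apply i).comp continuous_snd)
    have hDc : IsClosed (Φ '' K) := (hKcomp.image hΦcont).isClosed
    have hDconv : Convex ℝ (Φ '' K) := by
      rintro x ⟨p, hp, rfl⟩ xv ⟨q, hq, rfl⟩ s t hs ht hst
      refine ⟨s • p + t • q, ⟨?_, ?_, ?_⟩, ?_⟩
      · intro i j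
        have e1 : (s • p + t • q).1 i j = s * p.1 i j + t * q.1 i j := rfl
        have e2 : (s • p + t • q).1 j i = s * p.1 j i + t * q.1 j i := rfl
        rw [e1, e2, hp.1 i j, hq.1 i j]; ring
      · intro i j
        have := (convex_signSet (f i - f j)) (hp.2.1 i j) (hq.2.1 i j) hs ht hst
        simpa using this
      · intro i
        have := (convex_signSet (f i)) (hp.2.2 i) (hq.2.2 i) hs ht hst
        simpa using this
      · funext i
        simp only [hΦ, Pi.add_apply, Pi.smul_apply, smul_eq_mul]
        have e1 : ∀ j, W i j * (s • p + t • q).1 i j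
            = s * (W i j * p.1 i j) + t * (W i j * q.1 i j) := by
          intro j
          have : (s • p + t • q).1 i j = s * p.1 i j + t * q.1 i j := rfl
          rw [this]; ring
        rw [Finset.sum_congr rfl fun j _ => e1 j, Finset.sum_add_distrib,
          ← Finset.mul_sum, ← Finset.mul_sum]
        have e2 : (s • p + t • q).2 i = s * p.2 i + t * q.2 i := rfl
        rw [e2]; ring
    obtain ⟨ψ, u₀, hψlt, hψ0⟩ := geometric_hahn_banach_closed_point hDconv hDc h0notin
    rw [show ψ (0 : Fin n → ℝ) = 0 from map_zero ψ] at hψ0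
    set y : Fin n → ℝ := fun i => ψ (Pi.single i 1) with hy
    have hψeval : ∀ v : Fin n → ℝ, ψ v = ∑ i, v i * y i := by
      intro v
      have hv : v = ∑ i, v i • (Pi.single i (1:ℝ) : Fin n → ℝ) := by
        funext j
        rw [Finset.sum_apply]
        simp only [Pi.smul_apply, Pi.single_apply, smul_eq_mul, mul_ite, mul_one, mul_zero]
        rw [Finset.sum_ite_eq Finset.univ j v]
        simp
      conv_lhs => rw [hv]
      rw [map_sum]
      exact Finset.sum_congr rfl fun i _ => by rw [map_smul]; rfl
    set ustar : Fin n → Fin n → ℝ := fun i j =>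
      if f i < f j then -1 else if f j < f i then 1 else rsgn (y i - y j) with hustar
    set astar : Fin n → ℝ := fun i =>
      if 0 < f i then 1 else if f i < 0 then -1 else - rsgn (y i) with hastar
    -- pointwise values of ustar
    have hu_in_in : ∀ i j, i ∈ C → j ∈ C → ustar i j = rsgn (y i - y j) := by
      intro i j hi hj
      simp only [hustar]
      rw [(hfval i).1 hi, (hfval j).1 hj]
      norm_num
    have hu_out_out : ∀ i j, i ∉ C → j ∉ C → ustar i j = rsgn (y i - y j) := by
      intro i j hi hj
      simp only [hustar]
      rw [(hfval i).2 hi, (hfval j).2 hj]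
      norm_num
    have hu_in_out : ∀ i j, i ∈ C → j ∉ C → ustar i j = 1 := by
      intro i j hi hj
      simp only [hustar]
      rw [(hfval i).1 hi, (hfval j).2 hj]
      norm_num
    have hu_out_in : ∀ i j, i ∉ C → j ∈ C → ustar i j = -1 := by
      intro i j hi hj
      simp only [hustar]
      rw [(hfval i).2 hi, (hfval j).1 hj]
      norm_num
    have ha_in : ∀ i, i ∈ C → astar i = 1 := by
      intro i hi
      simp only [hastar]
      rw [(hfval i).1 hi]
      norm_num
    have ha_out : ∀ i, i ∉ C → astar i = - rsgn (y i) := by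
      intro i hi
      simp only [hastar]
      rw [(hfval i).2 hi]
      norm_num
    have husym : ∀ i j, ustar i j = - ustar j i := by
      intro i j
      by_cases hic : i ∈ C <;> by_cases hjc : j ∈ C
      · rw [hu_in_in i j hic hjc, hu_in_in j i hjc hic,
          show y i - y j = -(y j - y i) by ring, rsgn_neg]
      · rw [hu_in_out i j hic hjc, hu_out_in j i hjc hic]; norm_num
      · rw [hu_out_in i j hic hjc, hu_in_out j i hjc hic]
      · rw [hu_out_out i j hic hjc, hu_out_out j i hjc hic,
          show y i - y j = -(y j - y i) by ring, rsgn_neg]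
    have humem : ∀ i j, ustar i j ∈ signSet (f i - f j) := by
      intro i j
      by_cases hic : i ∈ C <;> by_cases hjc : j ∈ C
      · rw [hu_in_in i j hic hjc,
          show f i - f j = 0 by rw [(hfval i).1 hic, (hfval j).1 hjc]; ring, signSet_zero']
        exact ⟨(rsgn_Icc _).1, (rsgn_Icc _).2⟩
      · rw [hu_in_out i j hic hjc,
          signSet_of_pos (by rw [(hfval i).1 hic, (hfval j).2 hjc]; norm_num :
            (0:ℝ) < f i - f j)]
        rfl
      · rw [hu_out_in i j hic hjc,
          signSet_of_neg (by rw [(hfval i).2 hic, (hfval j).1 hjc]; norm_num :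
            f i - f j < 0)]
        rfl
      · rw [hu_out_out i j hic hjc,
          show f i - f j = 0 by rw [(hfval i).2 hic, (hfval j).2 hjc]; ring, signSet_zero']
        exact ⟨(rsgn_Icc _).1, (rsgn_Icc _).2⟩
    have hamem : ∀ i, astar i ∈ signSet (f i) := by
      intro i
      by_cases hic : i ∈ C
      · rw [ha_in i hic, signSet_of_pos (by rw [(hfval i).1 hic]; norm_num : (0:ℝ) < f i)]
        rfl
      · rw [ha_out i hic, show f i = 0 from (hfval i).2 hic, signSet_zero']
        constructor
        · have := (rsgn_Icc (y i)).2; linarith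
        · have := (rsgn_Icc (y i)).1; linarith
    have hmemK : ((ustar, astar) : (Fin n → Fin n → ℝ) × (Fin n → ℝ)) ∈ K :=
      ⟨husym, humem, hamem⟩
    have hlt := hψlt _ ⟨(ustar, astar), hmemK, rfl⟩
    set a : Fin n → Fin n → ℝ := fun i j => W i j * ustar i j with haa
    have haan : ∀ i j, a i j = - a j i := by
      intro i j
      simp only [haa]
      rw [hsym i j, husym i j]; ring
    have hrho : ∀ i j, a i j * (y i - y j) = W i j * rho C i j y := by
      intro i j
      simp only [haa]
      by_cases hic : i ∈ C <;> by_cases hjc : j ∈ C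
      · rw [hu_in_in i j hic hjc, rho, if_pos (iff_of_true hic hjc), mul_assoc, rsgn_mul]
      · rw [hu_in_out i j hic hjc, rho, if_neg (by simp [hic, hjc]), if_pos hic]; ring
      · rw [hu_out_in i j hic hjc, rho, if_neg (by simp [hic, hjc]), if_neg hic]; ring
      · rw [hu_out_out i j hic hjc, rho, if_pos (iff_of_false hic hjc), mul_assoc, rsgn_mul]
    have hastar_sum : ∑ i, astar i * y i = (∑ i ∈ C, y i) - ∑ i ∈ Cᶜ, |y i| := by
      have hsplit := Finset.sum_add_sum_compl C (fun i => astar i * y i)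
      rw [← hsplit]
      have hC : ∀ i ∈ C, astar i * y i = y i := by
        intro i hi; rw [ha_in i hi]; ring
      have hCc : ∀ i ∈ Cᶜ, astar i * y i = - |y i| := by
        intro i hi
        rw [ha_out i (Finset.mem_compl.1 hi),
          show - rsgn (y i) * y i = -(rsgn (y i) * y i) by ring, rsgn_mul]
      rw [Finset.sum_congr rfl hC, Finset.sum_congr rfl hCc, Finset.sum_neg_distrib]
      ring
    have hcomp : 2 * ψ (Φ (ustar, astar))
        = (∑ i, ∑ j, W i j * rho C i j y)
          - h * (2 * ((∑ i ∈ C, y i) - ∑ i ∈ Cᶜ, |y i|)) := by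
      rw [hψeval]
      have e1 : ∀ i, Φ (ustar, astar) i * y i
          = (∑ j, a i j) * y i - h * (astar i * y i) := by
        intro i
        simp only [hΦ, haa]
        ring
      rw [Finset.sum_congr rfl fun i (_ : i ∈ Finset.univ) => e1 i, Finset.sum_sub_distrib,
        ← Finset.mul_sum, hastar_sum]
      have e2 : ∑ i, ∑ j, W i j * rho C i j y = 2 * ∑ i, (∑ j, a i j) * y i := by
        have e3 := sum_antisym_mul haan y
        rw [← e3]
        exact Finset.sum_congr rfl fun i _ => Finset.sum_congr rfl fun j _ => (hrho i j).symm
      rw [e2]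
      ring
    have hmas := master2 hsym hnn h h0 hM C hCle hcutC y
    linarith

end CheegerAux

/-- For a connected graph, the smallest eigenvalue of the graph 1-Laplacian admitting a
nonconstant eigenvector exists and equals the optimal ratio Cheeger cut `h_RCC`. -/
theorem second_eigenvalue_eq_cheeger (n : ℕ) (hn : 2 ≤ n)
    (W : Fin n → Fin n → ℝ)
    (hsym : ∀ i j, W i j = W j i) (hnonneg : ∀ i j, 0 ≤ W i j)
    (hconn : ∀ C : Finset (Fin n), C.Nonempty → C ≠ Finset.univ →
      0 < ∑ i ∈ C, ∑ j ∈ Cᶜ, W i j)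
    (hRCC : ℝ)
    (hmin : IsLeast {r : ℝ | ∃ C : Finset (Fin n), C.Nonempty ∧ C ≠ Finset.univ ∧
      r = RCC W C} hRCC) :
    IsLeast {lam : ℝ | ∃ f : Fin n → ℝ, (¬ ∃ c : ℝ, ∀ i, f i = c) ∧
      IsEig1Lap W f lam} hRCC := by
  classical
  obtain ⟨C₀, hC₀ne, hC₀nu, hC₀eq⟩ := hmin.1
  have hlb := hmin.2
  have hM : ∀ T : Finset (Fin n), hRCC * min ((T.card : ℝ)) ((Tᶜ.card : ℝ))
      ≤ CheegerAux.cutW W T := by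
    intro T
    by_cases hTe : T = ∅
    · subst hTe
      simp only [Finset.card_empty, Nat.cast_zero]
      rw [min_eq_left (by positivity), mul_zero]
      exact CheegerAux.cutW_nonneg W hnonneg _
    by_cases hTu : T = Finset.univ
    · subst hTu
      rw [Finset.compl_univ]
      simp only [Finset.card_empty, Nat.cast_zero]
      rw [min_eq_right (by positivity), mul_zero]
      exact CheegerAux.cutW_nonneg W hnonneg _
    · have hTne : T.Nonempty := Finset.nonempty_iff_ne_empty.2 hTe
      have hTcne : Tᶜ.Nonempty := by
        rw [Finset.nonempty_iff_ne_empty]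
        intro habs
        exact hTu (by simpa using congrArg compl habs)
      have hle : hRCC ≤ RCC W T := hlb ⟨T, hTne, hTu, rfl⟩
      have hpos : (0:ℝ) < min ((T.card : ℝ)) ((Tᶜ.card : ℝ)) := by
        apply lt_min
        · exact_mod_cast Finset.card_pos.2 hTne
        · exact_mod_cast Finset.card_pos.2 hTcne
      rw [RCC] at hle
      calc hRCC * min ((T.card : ℝ)) ((Tᶜ.card : ℝ))
          ≤ ((∑ i ∈ T, ∑ j ∈ Tᶜ, W i j) / min ((T.card : ℝ)) ((Tᶜ.card : ℝ)))
            * min ((T.card : ℝ)) ((Tᶜ.card : ℝ)) :=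
            mul_le_mul_of_nonneg_right hle (le_of_lt hpos)
        _ = ∑ i ∈ T, ∑ j ∈ Tᶜ, W i j := div_mul_cancel₀ _ (ne_of_gt hpos)
        _ = CheegerAux.cutW W T := rfl
  have hCex : ∃ C : Finset (Fin n), C.Nonempty ∧ C ≠ Finset.univ ∧ C.card ≤ Cᶜ.card ∧
      hRCC = RCC W C := by
    by_cases hcle : C₀.card ≤ C₀ᶜ.card
    · exact ⟨C₀, hC₀ne, hC₀nu, hcle, hC₀eq⟩
    · push_neg at hcle
      have hnum : ∑ i ∈ C₀ᶜ, ∑ j ∈ C₀, W i j = ∑ i ∈ C₀, ∑ j ∈ C₀ᶜ, W i j := by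
        have hcc := CheegerAux.cutW_compl W hsym C₀
        unfold CheegerAux.cutW at hcc
        rwa [compl_compl] at hcc
      refine ⟨C₀ᶜ, ?_, ?_, ?_, ?_⟩
      · rw [Finset.nonempty_iff_ne_empty]
        intro habs
        exact hC₀nu (by simpa using congrArg compl habs)
      · intro habs
        have : C₀ = ∅ := by simpa using congrArg compl habs
        exact absurd this (Finset.nonempty_iff_ne_empty.1 hC₀ne)
      · rw [compl_compl]; omega
      · rw [hC₀eq]
        simp only [RCC, compl_compl]
        rw [hnum, min_comm ((C₀.card : ℝ)) ((C₀ᶜ.card : ℝ))]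
  obtain ⟨C, hCne, hCnu, hCle, hCeq⟩ := hCex
  have hcut_pos : 0 < CheegerAux.cutW W C := hconn C hCne hCnu
  have hmineq : min ((C.card : ℝ)) ((Cᶜ.card : ℝ)) = (C.card : ℝ) := by
    apply min_eq_left; exact_mod_cast hCle
  have hcard_pos : (0:ℝ) < (C.card : ℝ) := by exact_mod_cast Finset.card_pos.2 hCne
  have hcutC : CheegerAux.cutW W C = hRCC * C.card := by
    rw [hCeq]
    rw [RCC, hmineq, div_mul_cancel₀ _ (ne_of_gt hcard_pos)]
    rfl
  have h0 : 0 ≤ hRCC := by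
    rw [hCeq, RCC, hmineq]
    apply div_nonneg _ (le_of_lt hcard_pos)
    exact le_of_lt (hconn C hCne hCnu)
  constructor
  · obtain ⟨f, hnc, heig⟩ :=
      CheegerAux.membership hsym hnonneg hRCC h0 hM C hCne hCnu hCle hcutC
    exact ⟨f, hnc, heig⟩
  · intro lam hlam
    obtain ⟨f, hnc, heig⟩ := hlam
    exact CheegerAux.lower_bound hn hsym hnonneg hconn hRCC hM f hnc lam heig
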